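/- Let Z ⊆ ℝⁿ be a nonempty closed convex set, F : Z → ℝⁿ a monotone and L-Lipschitz operator, and z* ∈ Z a solution of the variational inequality. For any T ≥ 1, the T-th iterate z_T of the extragradient algorithm with constant step size η ∈ (0, 1/L) started at z₀ ∈ Z satisfies r^tan_{(F,Z)}(z_T) ≤ (1/√T) · 3‖z₀ − z*‖ / (η√(1 − (ηL)²)); consequently, the natural residual satisfies the same bound: r^nat_{(F,Z)}(z_T) ≤ (1/√T) · 3‖z₀ − z*‖ / (η√(1 − (ηL)²)). -/

import Mathlib

open scoped RealInnerProductSpace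

/-- The normal cone of the set `Z` at the point `z`. -/
def normalCone {E : Type*} [NormedAddCommGroup E] [InnerProductSpace ℝ E]
    (Z : Set E) (z : E) : Set E :=
  {v | ∀ z' ∈ Z, ⟪v, z' - z⟫ ≤ 0}

/-- The tangent residual `r^tan_{(F,Z)}(z) = inf_{a ∈ N_Z(z)} ‖F z + a‖`. -/
noncomputable def rtan {E : Type*} [NormedAddCommGroup E] [InnerProductSpace ℝ E]
    (F : E → E) (Z : Set E) (z : E) : ℝ :=
  sInf ((fun a => ‖F z + a‖) '' normalCone Z z)

section Aux

variable {E : Type*} [NormedAddCommGroup E] [InnerProductSpace ℝ E]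

/-- Energy identity for one extragradient step. -/
lemma eg_ident1 (x b c zs fx fb fzs : E) (η : ℝ) :
    ‖c - zs‖^2 = ‖x - zs‖^2 - ‖x - b‖^2 - ‖c - b‖^2
      + 2*⟪x - η•fb - c, zs - c⟫ + 2*η*⟪fx - fb, c - b⟫
      + 2*⟪x - η•fx - b, c - b⟫ - 2*η*⟪fb - fzs, b - zs⟫ + 2*η*⟪fzs, zs - b⟫ := by
  simp only [← real_inner_self_eq_norm_sq, inner_sub_left, inner_sub_right,
    real_inner_smul_left, real_inner_smul_right]
  simp only [real_inner_comm]
  ring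

/-- Key identity for monotonicity of the tangent residual along EG steps. -/
lemma eg_ident2 (x b c fx fb fc nv : E) (η : ℝ) :
    ‖η•fx + η•nv‖^2 - ‖x - c - η•fb + η•fc‖^2 =
      -2*⟪x - η•fb - c, x - c⟫ + 2*η*⟪fx - fc, x - c⟫
      - 2*⟪x - η•fx - b, c - b⟫ - 2*η*⟪nv, b - x⟫
      + (‖b - c‖^2 - ‖η•fb - η•fc‖^2) + ‖x - b - η•fx - η•nv‖^2 := by
  simp only [← real_inner_self_eq_norm_sq, inner_sub_left, inner_sub_right,
    inner_add_left, inner_add_right, real_inner_smul_left, real_inner_smul_right]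
  simp only [real_inner_comm]
  ring

end Aux

set_option maxHeartbeats 2000000 in
theorem eg_last_iterate_residuals {n : ℕ}
    (Z : Set (EuclideanSpace ℝ (Fin n))) (hne : Z.Nonempty) (hcl : IsClosed Z)
    (hconv : Convex ℝ Z)
    (F : EuclideanSpace ℝ (Fin n) → EuclideanSpace ℝ (Fin n)) (L : ℝ)
    (hmono : ∀ z ∈ Z, ∀ z' ∈ Z, 0 ≤ ⟪F z - F z', z - z'⟫)
    (hLip : ∀ z ∈ Z, ∀ z' ∈ Z, ‖F z - F z'‖ ≤ L * ‖z - z'‖)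
    (η : ℝ) (hL : 0 < L) (hη0 : 0 < η) (hη1 : η < 1 / L)
    (proj : EuclideanSpace ℝ (Fin n) → EuclideanSpace ℝ (Fin n))
    (hprojmem : ∀ x, proj x ∈ Z)
    (hprojmin : ∀ x, ∀ y ∈ Z, ‖x - proj x‖ ≤ ‖x - y‖)
    (zs : EuclideanSpace ℝ (Fin n)) (hzs : zs ∈ Z)
    (hsol : ∀ z ∈ Z, ⟪F zs, zs - z⟫ ≤ 0)
    (z zh : ℕ → EuclideanSpace ℝ (Fin n)) (hz0 : z 0 ∈ Z)
    (hzh : ∀ k, zh k = proj (z k - η • F (z k)))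
    (hziter : ∀ k, z (k + 1) = proj (z k - η • F (zh k)))
    (T : ℕ) (hT : 1 ≤ T) :
    rtan F Z (z T) ≤
        (1 / Real.sqrt T) * (3 * ‖z 0 - zs‖ / (η * Real.sqrt (1 - (η * L) ^ 2))) ∧
      ‖z T - proj (z T - F (z T))‖ ≤
        (1 / Real.sqrt T) * (3 * ‖z 0 - zs‖ / (η * Real.sqrt (1 - (η * L) ^ 2))) := by
  -- basic facts
  have ht1 : η * L < 1 := (lt_div_iff₀ hL).1 hη1
  have ht0 : 0 < η * L := mul_pos hη0 hL
  have hs2 : 0 < 1 - (η * L)^2 := by nlinarith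
  -- projection characterization
  have hchar : ∀ (x : EuclideanSpace ℝ (Fin n)), ∀ y ∈ Z, ⟪x - proj x, y - proj x⟫ ≤ 0 := by
    intro x
    haveI : Nonempty Z := hne.to_subtype
    have hbdd : BddBelow (Set.range fun w : Z => ‖x - (w : EuclideanSpace ℝ (Fin n))‖) := by
      refine ⟨0, ?_⟩
      rintro r ⟨w, rfl⟩
      exact norm_nonneg _
    have heq : ‖x - proj x‖ = ⨅ w : Z, ‖x - (w : EuclideanSpace ℝ (Fin n))‖ := by
      apply le_antisymm
      · exact le_ciInf fun w => hprojmin x w w.2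
      · exact ciInf_le hbdd ⟨proj x, hprojmem x⟩
    exact (norm_eq_iInf_iff_real_inner_le_zero hconv (hprojmem x)).1 heq
  -- nonexpansiveness of projection
  have hnonexp : ∀ x y : EuclideanSpace ℝ (Fin n), ‖proj x - proj y‖ ≤ ‖x - y‖ := by
    intro x y
    have h1 := hchar x (proj y) (hprojmem y)
    have h2 := hchar y (proj x) (hprojmem x)
    have h3 : ‖proj x - proj y‖^2 ≤ ⟪x - y, proj x - proj y⟫ := by
      have expand : ⟪x - y, proj x - proj y⟫ - ‖proj x - proj y‖^2 =
          -⟪x - proj x, proj y - proj x⟫ - ⟪y - proj y, proj x - proj y⟫ := by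
        simp only [← real_inner_self_eq_norm_sq, inner_sub_left, inner_sub_right]
        simp only [real_inner_comm]
        ring
      linarith
    have h4 := real_inner_le_norm (x - y) (proj x - proj y)
    nlinarith [norm_nonneg (proj x - proj y), norm_nonneg (x - y)]
  -- membership of iterates
  have hzmem : ∀ k, z k ∈ Z := by
    intro k
    cases k with
    | zero => exact hz0
    | succ k => rw [hziter k]; exact hprojmem _
  have hzhmem : ∀ k, zh k ∈ Z := fun k => (hzh k) ▸ hprojmem _
  -- energy inequality
  have energy : ∀ k, ‖z (k+1) - zs‖^2 + (1 - (η*L)^2) * ‖z k - zh k‖^2 ≤ ‖z k - zs‖^2 := by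
    intro k
    have le1 : ⟪z k - η • F (zh k) - z (k+1), zs - z (k+1)⟫ ≤ 0 := by
      have := hchar (z k - η • F (zh k)) zs hzs
      rwa [← hziter k] at this
    have le2 : ⟪z k - η • F (z k) - zh k, z (k+1) - zh k⟫ ≤ 0 := by
      have := hchar (z k - η • F (z k)) (z (k+1)) (hzmem (k+1))
      rwa [← hzh k] at this
    have le3 : 0 ≤ ⟪F (zh k) - F zs, zh k - zs⟫ := hmono _ (hzhmem k) _ hzs
    have le4 : ⟪F zs, zs - zh k⟫ ≤ 0 := hsol _ (hzhmem k)
    have cs : ⟪F (z k) - F (zh k), z (k+1) - zh k⟫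
        ≤ ‖F (z k) - F (zh k)‖ * ‖z (k+1) - zh k‖ := real_inner_le_norm _ _
    have lip : ‖F (z k) - F (zh k)‖ ≤ L * ‖z k - zh k‖ := hLip _ (hzmem k) _ (hzhmem k)
    have id1 := eg_ident1 (z k) (zh k) (z (k+1)) zs (F (z k)) (F (zh k)) (F zs) η
    have h6 : η * ⟪F (z k) - F (zh k), z (k+1) - zh k⟫
        ≤ η * (L * ‖z k - zh k‖ * ‖z (k+1) - zh k‖) := by
      apply mul_le_mul_of_nonneg_left _ hη0.le
      calc ⟪F (z k) - F (zh k), z (k+1) - zh k⟫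
          ≤ ‖F (z k) - F (zh k)‖ * ‖z (k+1) - zh k‖ := cs
        _ ≤ L * ‖z k - zh k‖ * ‖z (k+1) - zh k‖ :=
            mul_le_mul_of_nonneg_right lip (norm_nonneg _)
    nlinarith [sq_nonneg (η * L * ‖z k - zh k‖ - ‖z (k+1) - zh k‖),
      mul_nonneg hη0.le le3,
      mul_le_mul_of_nonneg_left le4 hη0.le, hη0.le]
  -- telescoped sum
  have sumg : ∀ m, (1 - (η*L)^2) * ∑ k ∈ Finset.range m, ‖z k - zh k‖^2
      + ‖z m - zs‖^2 ≤ ‖z 0 - zs‖^2 := by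
    intro m
    induction m with
    | zero => simp
    | succ m ih =>
      rw [Finset.sum_range_succ]
      have := energy m
      nlinarith
  -- normal cone membership of canonical normals
  have hwN : ∀ k, η⁻¹ • (z k - η • F (zh k) - z (k+1)) ∈ normalCone Z (z (k+1)) := by
    intro k y hy
    have h := hchar (z k - η • F (zh k)) y hy
    rw [← hziter k] at h
    have : ⟪η⁻¹ • (z k - η • F (zh k) - z (k+1)), y - z (k+1)⟫
        = η⁻¹ * ⟪z k - η • F (zh k) - z (k+1), y - z (k+1)⟫ := real_inner_smul_left _ _ _
    rw [this]
    exact mul_nonpos_of_nonneg_of_nonpos (inv_nonneg.2 hη0.le) h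
  -- rewriting of the residual vector
  have e1 : ∀ k, F (z (k+1)) + η⁻¹ • (z k - η • F (zh k) - z (k+1))
      = η⁻¹ • (z k - z (k+1) - η • F (zh k) + η • F (z (k+1))) := by
    intro k
    rw [show z k - z (k+1) - η • F (zh k) + η • F (z (k+1))
        = η • F (z (k+1)) + (z k - η • F (zh k) - z (k+1)) by abel,
      smul_add, inv_smul_smul₀ (ne_of_gt hη0)]
  -- KEY: monotonicity of residual
  have key : ∀ k (nv : EuclideanSpace ℝ (Fin n)), nv ∈ normalCone Z (z k) →
      ‖F (z (k+1)) + η⁻¹ • (z k - η • F (zh k) - z (k+1))‖ ≤ ‖F (z k) + nv‖ := by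
    intro k nv hnv
    have k1 : ⟪z k - η • F (zh k) - z (k+1), z k - z (k+1)⟫ ≤ 0 := by
      have := hchar (z k - η • F (zh k)) (z k) (hzmem k)
      rwa [← hziter k] at this
    have k2 : 0 ≤ ⟪F (z k) - F (z (k+1)), z k - z (k+1)⟫ :=
      hmono _ (hzmem k) _ (hzmem (k+1))
    have k3 : ⟪z k - η • F (z k) - zh k, z (k+1) - zh k⟫ ≤ 0 := by
      have := hchar (z k - η • F (z k)) (z (k+1)) (hzmem (k+1))
      rwa [← hzh k] at this
    have k4 : ⟪nv, zh k - z k⟫ ≤ 0 := hnv (zh k) (hzhmem k)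
    have lip : ‖F (zh k) - F (z (k+1))‖ ≤ L * ‖zh k - z (k+1)‖ :=
      hLip _ (hzhmem k) _ (hzmem (k+1))
    have hlips : ‖η • F (zh k) - η • F (z (k+1))‖ ≤ ‖zh k - z (k+1)‖ := by
      rw [← smul_sub, norm_smul, Real.norm_eq_abs, abs_of_pos hη0]
      calc η * ‖F (zh k) - F (z (k+1))‖ ≤ η * (L * ‖zh k - z (k+1)‖) :=
            mul_le_mul_of_nonneg_left lip hη0.le
        _ = (η * L) * ‖zh k - z (k+1)‖ := by ring
        _ ≤ 1 * ‖zh k - z (k+1)‖ :=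
            mul_le_mul_of_nonneg_right ht1.le (norm_nonneg _)
        _ = ‖zh k - z (k+1)‖ := one_mul _
    have hlipsq : ‖η • F (zh k) - η • F (z (k+1))‖^2 ≤ ‖zh k - z (k+1)‖^2 := by
      have h0 := norm_nonneg (η • F (zh k) - η • F (z (k+1)))
      nlinarith
    have id2 := eg_ident2 (z k) (zh k) (z (k+1)) (F (z k)) (F (zh k)) (F (z (k+1))) nv η
    have hsq : ‖z k - z (k+1) - η • F (zh k) + η • F (z (k+1))‖^2
        ≤ ‖η • F (z k) + η • nv‖^2 := by
      nlinarith [sq_nonneg ‖z k - zh k - η • F (z k) - η • nv‖,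
        mul_nonneg hη0.le k2, mul_le_mul_of_nonneg_left k4 hη0.le]
    have goal2 : ‖z k - z (k+1) - η • F (zh k) + η • F (z (k+1))‖
        ≤ ‖η • F (z k) + η • nv‖ := by
      nlinarith [norm_nonneg (z k - z (k+1) - η • F (zh k) + η • F (z (k+1))),
        norm_nonneg (η • F (z k) + η • nv)]
    have e2 : F (z k) + nv = η⁻¹ • (η • F (z k) + η • nv) := by
      rw [smul_add, inv_smul_smul₀ (ne_of_gt hη0), inv_smul_smul₀ (ne_of_gt hη0)]
    rw [e1 k, e2, norm_smul, norm_smul]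
    exact mul_le_mul_of_nonneg_left goal2 (norm_nonneg _)
  -- one-step residual bound
  have step : ∀ k, ‖F (z (k+1)) + η⁻¹ • (z k - η • F (zh k) - z (k+1))‖
      ≤ 3 / η * ‖z k - zh k‖ := by
    intro k
    have hne1 : ‖z (k+1) - zh k‖ ≤ η * L * ‖z k - zh k‖ := by
      have h := hnonexp (z k - η • F (zh k)) (z k - η • F (z k))
      rw [← hziter k, ← hzh k] at h
      have heq : z k - η • F (zh k) - (z k - η • F (z k)) = η • (F (z k) - F (zh k)) := by
        rw [smul_sub]; abel
      rw [heq, norm_smul, Real.norm_eq_abs, abs_of_pos hη0] at h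
      calc ‖z (k+1) - zh k‖ ≤ η * ‖F (z k) - F (zh k)‖ := h
        _ ≤ η * (L * ‖z k - zh k‖) :=
            mul_le_mul_of_nonneg_left (hLip _ (hzmem k) _ (hzhmem k)) hη0.le
        _ = η * L * ‖z k - zh k‖ := by ring
    have hlip2 : ‖F (z (k+1)) - F (zh k)‖ ≤ L * ‖z (k+1) - zh k‖ :=
      hLip _ (hzmem (k+1)) _ (hzhmem k)
    have htri : ‖z k - z (k+1) - η • F (zh k) + η • F (z (k+1))‖
        ≤ ‖z k - z (k+1)‖ + η * ‖F (z (k+1)) - F (zh k)‖ := by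
      calc ‖z k - z (k+1) - η • F (zh k) + η • F (z (k+1))‖
          = ‖(z k - z (k+1)) + η • (F (z (k+1)) - F (zh k))‖ := by
            rw [smul_sub]; congr 1; abel
        _ ≤ ‖z k - z (k+1)‖ + ‖η • (F (z (k+1)) - F (zh k))‖ := norm_add_le _ _
        _ = ‖z k - z (k+1)‖ + η * ‖F (z (k+1)) - F (zh k)‖ := by
            rw [norm_smul, Real.norm_eq_abs, abs_of_pos hη0]
    have htri2 : ‖z k - z (k+1)‖ ≤ ‖z k - zh k‖ + ‖z (k+1) - zh k‖ := by
      calc ‖z k - z (k+1)‖ = ‖(z k - zh k) - (z (k+1) - zh k)‖ := by congr 1; abel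
        _ ≤ ‖z k - zh k‖ + ‖z (k+1) - zh k‖ := norm_sub_le _ _
    rw [e1 k, norm_smul, Real.norm_eq_abs, abs_of_pos (inv_pos.2 hη0)]
    have hg : (0:ℝ) ≤ ‖z k - zh k‖ := norm_nonneg _
    have h3 : ‖z k - z (k+1) - η • F (zh k) + η • F (z (k+1))‖ ≤ 3 * ‖z k - zh k‖ := by
      have hb1 : η * ‖F (z (k+1)) - F (zh k)‖ ≤ η * L * (η * L * ‖z k - zh k‖) := by
        calc η * ‖F (z (k+1)) - F (zh k)‖ ≤ η * (L * ‖z (k+1) - zh k‖) :=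
              mul_le_mul_of_nonneg_left hlip2 hη0.le
          _ = η * L * ‖z (k+1) - zh k‖ := by ring
          _ ≤ η * L * (η * L * ‖z k - zh k‖) :=
              mul_le_mul_of_nonneg_left hne1 ht0.le
      nlinarith [htri, htri2, hne1]
    calc η⁻¹ * ‖z k - z (k+1) - η • F (zh k) + η • F (z (k+1))‖
        ≤ η⁻¹ * (3 * ‖z k - zh k‖) :=
          mul_le_mul_of_nonneg_left h3 (inv_nonneg.2 hη0.le)
      _ = 3 / η * ‖z k - zh k‖ := by field_simp
  -- residual monotone chain
  have Rchain : ∀ j k, k ≤ j →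
      ‖F (z (j+1)) + η⁻¹ • (z j - η • F (zh j) - z (j+1))‖
        ≤ ‖F (z (k+1)) + η⁻¹ • (z k - η • F (zh k) - z (k+1))‖ := by
    intro j
    induction j with
    | zero => intro k hk; interval_cases k; exact le_refl _
    | succ j ih =>
      intro k hk
      rcases Nat.lt_or_ge k (j+1) with h | h
      · exact le_trans (key (j+1) _ (hwN j)) (ih k (Nat.lt_succ_iff.1 h))
      · have : k = j + 1 := le_antisymm hk h
        subst this; exact le_refl _
  -- final assembly
  obtain ⟨m, rfl⟩ : ∃ m, T = m + 1 := ⟨T - 1, (Nat.succ_pred_eq_of_pos hT).symm⟩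
  set R := ‖F (z (m+1)) + η⁻¹ • (z m - η • F (zh m) - z (m+1))‖ with hR
  have hR0 : 0 ≤ R := norm_nonneg _
  -- summed bound
  have hsumbd : ((m:ℝ)+1) * R^2 ≤ 9 / η^2 * (‖z 0 - zs‖^2 / (1 - (η*L)^2)) := by
    have hsq : ∀ k ∈ Finset.range (m+1), R^2 ≤ 9/η^2 * ‖z k - zh k‖^2 := by
      intro k hk
      have hk' : k ≤ m := Nat.lt_succ_iff.1 (Finset.mem_range.1 hk)
      have h1 : R ≤ 3 / η * ‖z k - zh k‖ := le_trans (Rchain m k hk') (step k)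
      have h2 : (0:ℝ) ≤ 3 / η * ‖z k - zh k‖ :=
        mul_nonneg (by positivity) (norm_nonneg _)
      calc R^2 ≤ (3 / η * ‖z k - zh k‖)^2 := by nlinarith
        _ = 9/η^2 * ‖z k - zh k‖^2 := by field_simp; ring
    have hsum1 : ((m:ℝ)+1) * R^2 ≤ ∑ k ∈ Finset.range (m+1), 9/η^2 * ‖z k - zh k‖^2 := by
      have := Finset.sum_le_sum hsq
      rwa [Finset.sum_const, Finset.card_range, nsmul_eq_mul, Nat.cast_add,
        Nat.cast_one] at this
    have hsum2 : ∑ k ∈ Finset.range (m+1), ‖z k - zh k‖^2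
        ≤ ‖z 0 - zs‖^2 / (1 - (η*L)^2) := by
      rw [le_div_iff₀ hs2]
      have := sumg (m+1)
      nlinarith [sq_nonneg ‖z (m+1) - zs‖]
    calc ((m:ℝ)+1) * R^2 ≤ ∑ k ∈ Finset.range (m+1), 9/η^2 * ‖z k - zh k‖^2 := hsum1
      _ = 9/η^2 * ∑ k ∈ Finset.range (m+1), ‖z k - zh k‖^2 := by
          rw [Finset.mul_sum]
      _ ≤ 9/η^2 * (‖z 0 - zs‖^2 / (1 - (η*L)^2)) := by
          apply mul_le_mul_of_nonneg_left hsum2 (by positivity)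
  -- convert to the target bound
  have hRbound : R ≤ (1 / Real.sqrt ((m:ℝ)+1)) *
      (3 * ‖z 0 - zs‖ / (η * Real.sqrt (1 - (η * L) ^ 2))) := by
    have hSq : 0 < Real.sqrt ((m:ℝ)+1) := Real.sqrt_pos.2 (by positivity)
    have hSqsq : (Real.sqrt ((m:ℝ)+1))^2 = (m:ℝ)+1 := Real.sq_sqrt (by positivity)
    have hs : 0 < Real.sqrt (1 - (η*L)^2) := Real.sqrt_pos.2 hs2
    have hss : (Real.sqrt (1 - (η*L)^2))^2 = 1 - (η*L)^2 := Real.sq_sqrt hs2.le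
    have hD0 : (0:ℝ) ≤ ‖z 0 - zs‖ := norm_nonneg _
    have hA : (R * (Real.sqrt ((m:ℝ)+1) * (η * Real.sqrt (1 - (η*L)^2))))^2
        ≤ (3 * ‖z 0 - zs‖)^2 := by
      have expand : (R * (Real.sqrt ((m:ℝ)+1) * (η * Real.sqrt (1 - (η*L)^2))))^2
          = (((m:ℝ)+1) * R^2) * (η^2 * (1 - (η*L)^2)) := by
        rw [mul_pow, mul_pow, mul_pow, hSqsq, hss]; ring
      rw [expand]
      have h9 : 0 < η^2 * (1 - (η*L)^2) := by positivity
      have := mul_le_mul_of_nonneg_right hsumbd (le_of_lt h9)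
      calc (((m:ℝ)+1) * R^2) * (η^2 * (1 - (η*L)^2))
          ≤ (9 / η^2 * (‖z 0 - zs‖^2 / (1 - (η*L)^2))) * (η^2 * (1 - (η*L)^2)) := this
        _ = 9 * ‖z 0 - zs‖^2 := by
          field_simp
          rw [mul_div_assoc, div_self (show (1 - η^2*L^2 : ℝ) ≠ 0 from ne_of_gt (by nlinarith)), mul_one]
        _ = (3 * ‖z 0 - zs‖)^2 := by ring
    have hApos : 0 ≤ R * (Real.sqrt ((m:ℝ)+1) * (η * Real.sqrt (1 - (η*L)^2))) := by
      positivity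
    have hA' : R * (Real.sqrt ((m:ℝ)+1) * (η * Real.sqrt (1 - (η*L)^2)))
        ≤ 3 * ‖z 0 - zs‖ := by nlinarith
    rw [show (1 / Real.sqrt ((m:ℝ)+1)) * (3 * ‖z 0 - zs‖ / (η * Real.sqrt (1 - (η * L) ^ 2)))
        = (3 * ‖z 0 - zs‖) / (Real.sqrt ((m:ℝ)+1) * (η * Real.sqrt (1 - (η * L) ^ 2))) by
          field_simp]
    rw [le_div_iff₀ (by positivity)]
    linarith [hA']
  have hcast : Real.sqrt ((m+1 : ℕ) : ℝ) = Real.sqrt ((m:ℝ)+1) := by push_cast; ring_nf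
  constructor
  · -- tangent residual
    have hmem : ‖F (z (m+1)) + η⁻¹ • (z m - η • F (zh m) - z (m+1))‖
        ∈ (fun a => ‖F (z (m+1)) + a‖) '' normalCone Z (z (m+1)) :=
      ⟨_, hwN m, rfl⟩
    have hbdd : BddBelow ((fun a => ‖F (z (m+1)) + a‖) '' normalCone Z (z (m+1))) :=
      ⟨0, fun r ⟨a, _, ha⟩ => ha ▸ norm_nonneg _⟩
    have h1 : rtan F Z (z (m+1)) ≤ R := csInf_le hbdd hmem
    rw [hcast] at *
    exact le_trans h1 hRbound
  · -- natural residual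
    set p := proj (z (m+1) - F (z (m+1))) with hp
    have h1 : ⟪z (m+1) - F (z (m+1)) - p, z (m+1) - p⟫ ≤ 0 :=
      hchar (z (m+1) - F (z (m+1))) (z (m+1)) (hzmem (m+1))
    have h2 : ⟪η⁻¹ • (z m - η • F (zh m) - z (m+1)), p - z (m+1)⟫ ≤ 0 :=
      hwN m p (hprojmem _)
    have h3 : ‖z (m+1) - p‖^2
        ≤ ⟪F (z (m+1)) + η⁻¹ • (z m - η • F (zh m) - z (m+1)), z (m+1) - p⟫ := by
      have expand : ⟪F (z (m+1)) + η⁻¹ • (z m - η • F (zh m) - z (m+1)), z (m+1) - p⟫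
          - ‖z (m+1) - p‖^2
          = -⟪z (m+1) - F (z (m+1)) - p, z (m+1) - p⟫
            - ⟪η⁻¹ • (z m - η • F (zh m) - z (m+1)), p - z (m+1)⟫ := by
        simp only [← real_inner_self_eq_norm_sq, inner_add_left, inner_sub_left,
          inner_sub_right]
        simp only [real_inner_comm]
        ring
      linarith
    have h4 := real_inner_le_norm
      (F (z (m+1)) + η⁻¹ • (z m - η • F (zh m) - z (m+1))) (z (m+1) - p)
    have h5 : ‖z (m+1) - p‖ ≤ R := by
      nlinarith [norm_nonneg (z (m+1) - p), hR0]
    rw [hcast] at *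
    exact le_trans h5 hRbound
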